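/- If at least two of the three parameters a, b, c are nonzero, then there exists a nonzero j ∈ ℝ³ such that the matrix L = (i/|j|)·[[0, -c²j₃, a²j₂], [b²j₃, 0, -a²j₁], [-b²j₂, c²j₁, 0]] has a simple eigenvalue with strictly positive real part. -/

import Mathlib

open Matrix

/-- The matrix `L = (i/|j|) · [[0, -c²j₃, a²j₂], [b²j₃, 0, -a²j₁], [-b²j₂, c²j₁, 0]]`. -/
noncomputable def Lmat (a b c : ℝ) (j : Fin 3 → ℝ) : Matrix (Fin 3) (Fin 3) ℂ :=
  (Complex.I / ((Real.sqrt (j 0 ^ 2 + j 1 ^ 2 + j 2 ^ 2) : ℝ) : ℂ)) •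
    !![0, ((-(c ^ 2 * j 2) : ℝ) : ℂ), ((a ^ 2 * j 1 : ℝ) : ℂ);
       ((b ^ 2 * j 2 : ℝ) : ℂ), 0, ((-(a ^ 2 * j 0) : ℝ) : ℂ);
       ((-(b ^ 2 * j 1) : ℝ) : ℂ), ((c ^ 2 * j 0 : ℝ) : ℂ), 0]

open Polynomial in
lemma aux_mem_spectrum_of_isRoot {n : ℕ} (M : Matrix (Fin n) (Fin n) ℂ) (μ : ℂ)
    (h : M.charpoly.IsRoot μ) : μ ∈ spectrum ℂ M := by
  rw [spectrum.mem_iff]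
  intro hu
  rw [Matrix.isUnit_iff_isUnit_det, isUnit_iff_ne_zero] at hu
  apply hu
  have := eval_det (charmatrix M) μ
  rw [← Matrix.charpoly, Matrix.matPolyEquiv_charmatrix] at this
  rw [h] at this
  simp only [eval_sub, eval_X, eval_C] at this
  have e : (Matrix.scalar (Fin n)) μ - M = algebraMap ℂ (Matrix (Fin n) (Fin n) ℂ) μ - M := rfl
  rw [← e, ← this]

open Polynomial in
lemma aux_key (M : Matrix (Fin 3) (Fin 3) ℂ) (μ : ℂ) (hμ : 0 < μ.re)
    (hcp : M.charpoly = X * (X - C μ) * (X + C μ)) :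
    μ ∈ spectrum ℂ M ∧ 0 < μ.re ∧ Polynomial.rootMultiplicity μ M.charpoly = 1 := by
  have hμ0 : μ ≠ 0 := fun h => by simp [h] at hμ
  have h2μ : μ + μ ≠ 0 := by
    intro h
    have : (μ + μ).re = 0 := by rw [h]; simp
    simp [Complex.add_re] at this
    linarith
  refine ⟨aux_mem_spectrum_of_isRoot M μ ?_, hμ, ?_⟩
  · rw [hcp]; simp [Polynomial.IsRoot]
  · rw [hcp]
    have hX : (X : ℂ[X]) ≠ 0 := X_ne_zero
    have hXs : (X : ℂ[X]) - C μ ≠ 0 := X_sub_C_ne_zero μ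
    have hXa : (X : ℂ[X]) + C μ ≠ 0 := by
      intro h
      have := congrArg (Polynomial.eval (-μ + 1)) h
      simp at this
    rw [Polynomial.rootMultiplicity_mul (mul_ne_zero (mul_ne_zero hX hXs) hXa),
        Polynomial.rootMultiplicity_mul (mul_ne_zero hX hXs),
        Polynomial.rootMultiplicity_X_sub_C_self]
    rw [Polynomial.rootMultiplicity_eq_zero (by simpa [Polynomial.IsRoot] using hμ0),
        Polynomial.rootMultiplicity_eq_zero (by simpa [Polynomial.IsRoot] using hμ0)]

open Polynomial in
lemma aux_cp_bc (a b c : ℝ) : (Lmat a b c ![0,0,1]).charpoly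
    = X * (X - C ((|b*c| : ℝ) : ℂ)) * (X + C ((|b*c| : ℝ) : ℂ)) := by
  have h1 : Real.sqrt ((![0,0,1] : Fin 3 → ℝ) 0 ^ 2 + (![0,0,1] : Fin 3 → ℝ) 1 ^ 2
      + (![0,0,1] : Fin 3 → ℝ) 2 ^ 2) = 1 := by norm_num [Matrix.cons_val_two]
  have habs : ((|b*c| : ℝ) : ℂ)^2 = (b:ℂ)^2 * (c:ℂ)^2 := by
    norm_cast; rw [sq_abs]; ring
  rw [Matrix.charpoly, Matrix.det_fin_three]
  simp [Lmat, h1, charmatrix_apply, Matrix.smul_apply, Matrix.vecHead, Matrix.vecTail]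
  ring_nf
  simp only [← map_pow, ← _root_.map_mul, Complex.I_sq, habs]
  simp only [map_neg, Polynomial.C_1, _root_.map_mul]
  simp only [← Complex.ofReal_pow, sq_abs]
  ring

open Polynomial in
lemma aux_cp_ab (a b c : ℝ) : (Lmat a b c ![0,1,0]).charpoly
    = X * (X - C ((|a*b| : ℝ) : ℂ)) * (X + C ((|a*b| : ℝ) : ℂ)) := by
  have h1 : Real.sqrt ((![0,1,0] : Fin 3 → ℝ) 0 ^ 2 + (![0,1,0] : Fin 3 → ℝ) 1 ^ 2
      + (![0,1,0] : Fin 3 → ℝ) 2 ^ 2) = 1 := by norm_num [Matrix.cons_val_two]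
  have habs : ((|a*b| : ℝ) : ℂ)^2 = (a:ℂ)^2 * (b:ℂ)^2 := by
    norm_cast; rw [sq_abs]; ring
  rw [Matrix.charpoly, Matrix.det_fin_three]
  simp [Lmat, h1, charmatrix_apply, Matrix.smul_apply, Matrix.vecHead, Matrix.vecTail]
  ring_nf
  simp only [← map_pow, ← _root_.map_mul, Complex.I_sq, habs]
  simp only [map_neg, Polynomial.C_1, _root_.map_mul]
  simp only [← Complex.ofReal_pow, sq_abs]
  ring

open Polynomial in
lemma aux_cp_ac (a b c : ℝ) : (Lmat a b c ![1,0,0]).charpoly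
    = X * (X - C ((|a*c| : ℝ) : ℂ)) * (X + C ((|a*c| : ℝ) : ℂ)) := by
  have h1 : Real.sqrt ((![1,0,0] : Fin 3 → ℝ) 0 ^ 2 + (![1,0,0] : Fin 3 → ℝ) 1 ^ 2
      + (![1,0,0] : Fin 3 → ℝ) 2 ^ 2) = 1 := by norm_num [Matrix.cons_val_two]
  have habs : ((|a*c| : ℝ) : ℂ)^2 = (a:ℂ)^2 * (c:ℂ)^2 := by
    norm_cast; rw [sq_abs]; ring
  rw [Matrix.charpoly, Matrix.det_fin_three]
  simp [Lmat, h1, charmatrix_apply, Matrix.smul_apply, Matrix.vecHead, Matrix.vecTail]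
  ring_nf
  simp only [← map_pow, ← _root_.map_mul, Complex.I_sq, habs]
  simp only [map_neg, Polynomial.C_1, _root_.map_mul]
  simp only [← Complex.ofReal_pow, sq_abs]
  ring

theorem exists_unstable_simple_eigenvalue (a b c : ℝ)
    (h : (a ≠ 0 ∧ b ≠ 0) ∨ (a ≠ 0 ∧ c ≠ 0) ∨ (b ≠ 0 ∧ c ≠ 0)) :
    ∃ j : Fin 3 → ℝ, j ≠ 0 ∧ ∃ μ : ℂ, μ ∈ spectrum ℂ (Lmat a b c j) ∧ 0 < μ.re ∧
      Polynomial.rootMultiplicity μ (Matrix.charpoly (Lmat a b c j)) = 1 := by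
  rcases h with ⟨ha, hb⟩ | ⟨ha, hc⟩ | ⟨hb, hc⟩
  · refine ⟨![0,1,0], ?_, ((|a*b| : ℝ) : ℂ), ?_⟩
    · intro h; have := congrFun h 1; simp at this
    · have hre : (0:ℝ) < |a*b| := abs_pos.mpr (mul_ne_zero ha hb)
      exact aux_key _ _ (by simpa using hre) (aux_cp_ab a b c)
  · refine ⟨![1,0,0], ?_, ((|a*c| : ℝ) : ℂ), ?_⟩
    · intro h; have := congrFun h 0; simp at this
    · have hre : (0:ℝ) < |a*c| := abs_pos.mpr (mul_ne_zero ha hc)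
      exact aux_key _ _ (by simpa using hre) (aux_cp_ac a b c)
  · refine ⟨![0,0,1], ?_, ((|b*c| : ℝ) : ℂ), ?_⟩
    · intro h; have := congrFun h 2; simp at this
    · have hre : (0:ℝ) < |b*c| := abs_pos.mpr (mul_ne_zero hb hc)
      exact aux_key _ _ (by simpa using hre) (aux_cp_bc a b c)
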